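/- For every positive integer n and every δ with 0 < δ < 1/2, the function g̃_n(x) = n·x^{n−1}/(x^n + i) satisfies Re(x·g̃_n(x)) = n·x^{2n}/(x^{2n} + 1) for real x, and the set E_δ(g̃_n) = {x ∈ [−1,1] : |Re(x·g̃_n(x))| ≥ δn} = {x ∈ [−1,1] : |x| ≥ (1/δ − 1)^{−1/(2n)}} has Lebesgue measure strictly less than ln(1/δ − 1)/n. -/

import Mathlib

open MeasureTheory Set Real

theorem stmt14 (n : ℕ) (hn : 0 < n) (δ : ℝ) (hδ0 : 0 < δ) (hδ1 : δ < 1 / 2) :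
    (∀ x : ℝ, ((x : ℂ) * ((n : ℂ) * (x : ℂ) ^ (n - 1) / ((x : ℂ) ^ n + Complex.I))).re =
        n * x ^ (2 * n) / (x ^ (2 * n) + 1)) ∧
    {x : ℝ | x ∈ Icc (-1 : ℝ) 1 ∧
        δ * n ≤ |((x : ℂ) * ((n : ℂ) * (x : ℂ) ^ (n - 1) / ((x : ℂ) ^ n + Complex.I))).re|} =
      {x : ℝ | x ∈ Icc (-1 : ℝ) 1 ∧ (1 / δ - 1) ^ (-(1 : ℝ) / (2 * n)) ≤ |x|} ∧
    volume {x : ℝ | x ∈ Icc (-1 : ℝ) 1 ∧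
        δ * n ≤ |((x : ℂ) * ((n : ℂ) * (x : ℂ) ^ (n - 1) / ((x : ℂ) ^ n + Complex.I))).re|} <
      ENNReal.ofReal (Real.log (1 / δ - 1) / n) := by
  have hn' : (0:ℝ) < n := by exact_mod_cast hn
  set a : ℝ := 1 / δ - 1 with ha_def
  have ha1 : 1 < a := by
    have : 2 < 1 / δ := by
      rw [lt_div_iff₀ hδ0]; linarith
    simp only [ha_def]; linarith
  have ha0 : 0 < a := by linarith
  have hla : 0 < Real.log a := Real.log_pos ha1
  set c : ℝ := a ^ (-(1:ℝ) / (2 * n)) with hc_def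
  have hc0 : 0 < c := Real.rpow_pos_of_pos ha0 _
  have hc1 : c < 1 := by
    apply Real.rpow_lt_one_of_one_lt_of_neg ha1
    apply div_neg_of_neg_of_pos (by norm_num) (by linarith)
  have hδ' : (0:ℝ) < 1 - δ := by linarith
  have hinv : a⁻¹ = δ / (1 - δ) := by
    rw [ha_def]
    rw [eq_div_iff hδ'.ne', inv_mul_eq_div, div_eq_iff (by
      rw [ha_def] at ha0; linarith)]
    field_simp
  -- Part 1
  have key : ∀ x : ℝ, ((x : ℂ) * ((n : ℂ) * (x : ℂ) ^ (n - 1) / ((x : ℂ) ^ n + Complex.I))).re =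
      n * x ^ (2 * n) / (x ^ (2 * n) + 1) := by
    intro x
    have hx : (x:ℂ) * ((n:ℂ) * (x:ℂ) ^ (n - 1)) = (n:ℂ) * (x:ℂ) ^ n := by
      rw [mul_left_comm]
      congr 1
      rw [← pow_succ', Nat.sub_add_cancel hn]
    rw [mul_div_assoc', hx]
    have h2 : (x:ℂ)^n = ((x^n : ℝ) : ℂ) := by push_cast; ring
    have h3 : x ^ (2 * n) = (x ^ n) ^ 2 := by rw [pow_mul']
    rw [h2, Complex.div_re]
    simp only [Complex.normSq_apply, Complex.add_re, Complex.add_im, Complex.I_re, Complex.I_im,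
      Complex.mul_re, Complex.mul_im, Complex.ofReal_re, Complex.ofReal_im,
      Complex.natCast_re, Complex.natCast_im]
    rw [h3]
    have hpos : (0:ℝ) < (x ^ n) ^ 2 + 1 := by positivity
    simp only [mul_zero, zero_mul, add_zero, zero_add, mul_one, sub_zero]
    have hpos2 : (0:ℝ) < x ^ n * x ^ n + 1 := by nlinarith [sq_nonneg (x ^ n)]
    rw [← add_div, div_eq_div_iff hpos2.ne' hpos.ne']
    ring
  -- the set-equality iff
  have hiff : ∀ x : ℝ, (δ * n ≤ |(n:ℝ) * x ^ (2 * n) / (x ^ (2 * n) + 1)|) ↔ c ≤ |x| := by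
    intro x
    set u : ℝ := x ^ (2 * n) with hu_def
    have hu0 : 0 ≤ u := hu_def ▸ (even_two_mul n).pow_nonneg x
    have hu1 : 0 < u + 1 := by linarith
    have habs : |(n:ℝ) * u / (u + 1)| = (n:ℝ) * u / (u + 1) := by
      apply abs_of_nonneg; positivity
    rw [habs]
    have step1 : δ * n ≤ (n:ℝ) * u / (u + 1) ↔ a⁻¹ ≤ u := by
      rw [mul_comm δ (n:ℝ), mul_div_assoc, mul_le_mul_iff_right₀ hn']
      rw [le_div_iff₀ hu1]
      constructor
      · intro h
        rw [hinv, div_le_iff₀ hδ']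
        nlinarith
      · intro h
        rw [hinv, div_le_iff₀ hδ'] at h
        nlinarith
    have step2 : a⁻¹ ≤ u ↔ c ≤ |x| := by
      have hxc : c ≤ |x| ↔ c ^ (2 * n) ≤ |x| ^ (2 * n) := by
        rw [pow_le_pow_iff_left₀ hc0.le (abs_nonneg x) (by positivity)]
      have hcpow : c ^ (2 * n) = a⁻¹ := by
        rw [hc_def, ← Real.rpow_natCast (a ^ _) (2 * n), ← Real.rpow_mul ha0.le]
        rw [show (-(1:ℝ) / (2 * n)) * ((2 * n : ℕ) : ℝ) = -1 by
          push_cast; field_simp]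
        exact Real.rpow_neg_one a
      have hxpow : |x| ^ (2 * n) = u := by
        rw [hu_def, (even_two_mul n).pow_abs]
      rw [hxc, hcpow, hxpow]
    rw [step1, step2]
  refine ⟨key, ?_, ?_⟩
  · ext x
    simp only [mem_setOf_eq, key x]
    exact and_congr_right fun _ => hiff x
  · have hset : {x : ℝ | x ∈ Icc (-1 : ℝ) 1 ∧
        δ * n ≤ |((x : ℂ) * ((n : ℂ) * (x : ℂ) ^ (n - 1) / ((x : ℂ) ^ n + Complex.I))).re|} =
        Icc (-1 : ℝ) 1 \ Ioo (-c) c := by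
      ext x
      simp only [mem_setOf_eq, key x, hiff x, mem_diff, mem_Ioo, ← abs_lt, not_lt]
    rw [hset]
    have hsub : Ioo (-c) c ⊆ Icc (-1 : ℝ) 1 := fun y hy =>
      ⟨by linarith [hy.1], by linarith [hy.2]⟩
    rw [measure_diff hsub measurableSet_Ioo.nullMeasurableSet (by
      rw [Real.volume_Ioo]; exact ENNReal.ofReal_ne_top)]
    rw [Real.volume_Icc, Real.volume_Ioo]
    rw [← ENNReal.ofReal_sub _ (by linarith)]
    have hclt : 1 - c < Real.log a / (2 * n) := by
      have hcexp : c = Real.exp (Real.log a * (-(1:ℝ) / (2 * n))) := by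
        rw [hc_def, Real.rpow_def_of_pos ha0]
      have hne : Real.log a * (-(1:ℝ) / (2 * n)) ≠ 0 := by
        apply mul_ne_zero (ne_of_gt hla)
        apply ne_of_lt
        apply div_neg_of_neg_of_pos (by norm_num) (by positivity)
      have := Real.add_one_lt_exp hne
      rw [← hcexp] at this
      have hq : Real.log a * (-(1:ℝ) / (2 * n)) = -(Real.log a / (2 * n)) := by
        field_simp
      rw [hq] at this
      linarith
    have hlt : 1 - -1 - (c - -c) < Real.log a / n := by
      have h2 : Real.log a / n = 2 * (Real.log a / (2 * n)) := by
        field_simp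
      rw [h2]; linarith
    calc ENNReal.ofReal (1 - -1 - (c - -c)) < ENNReal.ofReal (Real.log a / n) := by
          apply ENNReal.ofReal_lt_ofReal_iff_of_nonneg (by linarith) |>.mpr hlt
      _ = _ := rfl
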